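/- Let K be a commutative ring, v : ℕ → K, and A defined by the standard two-weight recurrence. Then A^{v,0}(n,k) equals the elementary symmetric function e_{n−k}(v_0, v_1, ..., v_{n−1}), and A^{0,v}(n,k) equals the complete homogeneous symmetric function h_{n−k}(v_0, v_1, ..., v_k). -/
import Mathlib

open Finset

/-- The generalized two-weight array `A^{v,w}(n,k)`. -/
def A {K : Type*} [CommRing K] (v w : ℕ → K) : ℕ → ℕ → K
  | 0, 0 => 1
  | 0, _ + 1 => 0
  | n + 1, 0 => (v n + w 0) * A v w n 0
  | n + 1, k + 1 => A v w n k + (v n + w (k + 1)) * A v w n (k + 1)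

section Aux
open Polynomial

lemma A_coeff {K : Type*} [CommRing K] (v : ℕ → K) (n : ℕ) :
    ∀ k, A v (fun _ => 0) n k = (∏ i ∈ range n, (X + C (v i))).coeff k := by
  induction n with
  | zero => intro k; cases k <;> simp [A, coeff_one]
  | succ n ih =>
    intro k
    rw [prod_range_succ, mul_add]
    cases k with
    | zero =>
      simp [A, ih 0, coeff_mul_C, mul_comm]
    | succ k =>
      simp [A, ih k, ih (k+1), coeff_add, coeff_mul_X, coeff_mul_C, mul_comm]

lemma part1 {K : Type*} [CommRing K] (v : ℕ → K) (n k : ℕ) (hk : k ≤ n) :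
    A v (fun _ => 0) n k = ∑ S ∈ (Finset.range n).powersetCard (n - k), ∏ i ∈ S, v i := by
  rw [A_coeff]
  have := Finset.prod_X_add_C_coeff (range n) v (k := k) (by simpa using hk)
  simpa using this

end Aux

section Aux2
variable {K : Type*} [CommRing K]

def Hs (v : ℕ → K) (m k : ℕ) : K :=
  ∑ f ∈ (Finset.univ : Finset (Fin m → Fin (k + 1))).filter
      (fun f => ∀ a b : Fin m, a ≤ b → f a ≤ f b),
    ∏ j : Fin m, v (f j)

lemma Hs_zero (v : ℕ → K) (k : ℕ) : Hs v 0 k = 1 := by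
  rw [Hs, Finset.filter_true_of_mem (fun f _ a => a.elim0)]
  simp

lemma Hs_right_zero (v : ℕ → K) (m : ℕ) : Hs v m 0 = v 0 ^ m := by
  rw [Hs, Finset.filter_true_of_mem (fun f _ a b _ => le_of_eq (by rw [Fin.fin_one_eq_zero (f a), Fin.fin_one_eq_zero (f b)]))]
  rw [Finset.sum_eq_single_of_mem (fun _ => 0) (Finset.mem_univ _)]
  · simp
  · intro f _ hf
    exact absurd (funext fun j => Fin.fin_one_eq_zero _) hf

lemma ne_last_aux {m k : ℕ} {f : Fin (m + 1) → Fin (k + 2)}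
    (hmono : ∀ a b : Fin (m + 1), a ≤ b → f a ≤ f b)
    (hne : f (Fin.last m) ≠ Fin.last (k + 1)) (j : Fin (m + 1)) :
    f j ≠ Fin.last (k + 1) := by
  intro hlast
  exact hne (le_antisymm (Fin.le_last _) (hlast ▸ hmono j (Fin.last m) (Fin.le_last j)))

lemma Hs_rec (v : ℕ → K) (m k : ℕ) :
    Hs v (m + 1) (k + 1) = Hs v (m + 1) k + v (k + 1) * Hs v m (k + 1) := by
  classical
  rw [Hs, ← Finset.sum_filter_add_sum_filter_not _
      (fun f : Fin (m + 1) → Fin (k + 2) => f (Fin.last m) = Fin.last (k + 1))]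
  rw [add_comm]
  congr 1
  · -- f (last) ≠ last : bijection with monotone Fin (m+1) → Fin (k+1)
    rw [Hs]
    refine Finset.sum_bij'
      (fun f hf => fun j => Fin.castPred (f j)
        (ne_last_aux (Finset.mem_filter.mp (Finset.mem_filter.mp hf).1).2
          (Finset.mem_filter.mp hf).2 j))
      (fun g _ => fun j => Fin.castSucc (g j)) ?_ ?_ ?_ ?_ ?_
    · intro f hf
      simp only [Finset.mem_filter, Finset.mem_univ, true_and] at hf ⊢
      intro a b hab
      rw [Fin.le_def, Fin.coe_castPred, Fin.coe_castPred, ← Fin.le_def]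
      exact hf.1 a b hab
    · intro g hg
      simp only [Finset.mem_filter, Finset.mem_univ, true_and] at hg ⊢
      refine ⟨fun a b hab => Fin.castSucc_le_castSucc_iff.mpr (hg a b hab),
        (Fin.castSucc_lt_last _).ne⟩
    · intro f hf
      funext j
      simp [Fin.castSucc_castPred]
    · intro g hg
      funext j
      simp [Fin.castPred_castSucc]
    · intro f hf
      refine Finset.prod_congr rfl fun j _ => ?_
      rw [Fin.coe_castPred]
  · -- f (last) = last : bijection with monotone Fin m → Fin (k+2)
    rw [Hs, Finset.mul_sum]
    refine Finset.sum_bij'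
      (fun f _ => fun j => f (Fin.castSucc j))
      (fun g _ => Fin.snoc g (Fin.last (k + 1))) ?_ ?_ ?_ ?_ ?_
    · intro f hf
      simp only [Finset.mem_filter, Finset.mem_univ, true_and] at hf ⊢
      exact fun a b hab => hf.1 _ _ (Fin.castSucc_le_castSucc_iff.mpr hab)
    · intro g hg
      simp only [Finset.mem_filter, Finset.mem_univ, true_and] at hg ⊢
      refine ⟨fun a b hab => ?_, ?_⟩
      · rcases Fin.eq_castSucc_or_eq_last b with ⟨b', rfl⟩ | rfl
        · rcases Fin.eq_castSucc_or_eq_last a with ⟨a', rfl⟩ | rfl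
          · simp only [Fin.snoc_castSucc]
            exact hg a' b' (Fin.castSucc_le_castSucc_iff.mp hab)
          · exact absurd (lt_of_lt_of_le (Fin.castSucc_lt_last b') hab).false id
        · simp only [Fin.snoc_last]
          exact Fin.le_last _
      · simp only [Fin.snoc_last]
    · intro f hf
      simp only [Finset.mem_filter, Finset.mem_univ, true_and] at hf
      funext j
      rcases Fin.eq_castSucc_or_eq_last j with ⟨j', rfl⟩ | rfl
      · simp only [Fin.snoc_castSucc]
      · simp only [Fin.snoc_last, hf.2]
    · intro g hg
      funext j
      simp only [Fin.snoc_castSucc]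
    · intro f hf
      simp only [Finset.mem_filter, Finset.mem_univ, true_and] at hf
      rw [Fin.prod_univ_castSucc, hf.2]
      simp [mul_comm]


lemma A_eq_zero (v w : ℕ → K) : ∀ n k, n < k → A v w n k = 0 := by
  intro n
  induction n with
  | zero => intro k hk; match k, hk with | k + 1, _ => rfl
  | succ n ih =>
    intro k hk
    match k, hk with
    | k + 1, hk =>
      rw [A, ih k (Nat.lt_of_succ_lt_succ hk), ih (k + 1) (Nat.lt_of_succ_lt hk),
        mul_zero, add_zero]

lemma part2 (v : ℕ → K) : ∀ n k, k ≤ n → A (fun _ => 0) v n k = Hs v (n - k) k := by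
  intro n
  induction n with
  | zero =>
    intro k hk
    interval_cases k
    rw [Hs_zero]; rfl
  | succ n ih =>
    intro k hk
    cases k with
    | zero =>
      rw [A, ih 0 (Nat.zero_le n), Hs_right_zero, Hs_right_zero, Nat.sub_zero,
        Nat.sub_zero, pow_succ, zero_add, mul_comm]
    | succ k =>
      have hk' : k ≤ n := Nat.le_of_succ_le_succ hk
      rcases Nat.lt_or_ge k n with h | h
      · have h1 : k + 1 ≤ n := h
        rw [A, ih k hk', ih (k + 1) h1, zero_add,
          Nat.succ_sub_succ, show n - k = (n - (k + 1)) + 1 from by omega, Hs_rec]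
      · have : k = n := le_antisymm hk' h
        subst this
        rw [A, ih k le_rfl, A_eq_zero _ v k (k + 1) (Nat.lt_succ_self k),
          Nat.succ_sub_succ, Nat.sub_self, mul_zero, add_zero, Hs_zero, Hs_zero]

end Aux2

theorem stmt_13 {K : Type*} [CommRing K] (v : ℕ → K) (n k : ℕ) (hk : k ≤ n) :
    (A v (fun _ => 0) n k =
        ∑ S ∈ (Finset.range n).powersetCard (n - k), ∏ i ∈ S, v i) ∧
      (A (fun _ => 0) v n k =
        ∑ f ∈ (Finset.univ : Finset (Fin (n - k) → Fin (k + 1))).filter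
            (fun f => ∀ a b : Fin (n - k), a ≤ b → f a ≤ f b),
          ∏ j : Fin (n - k), v (f j)) :=
  ⟨part1 v n k hk, part2 v n k hk⟩
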